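/- Let T be a summable ball kernel and let ψ be an ultrametric wavelet with ball I = B(c, p^{γ_I}). Then for every x ∈ ℚ_p the integral ∫ T(sup(x, y)) (ψ(x) − ψ(y)) dμ(y) converges absolutely and equals λ_I · ψ(x), where λ_I = T(I) p^{γ_I} + Σ_{γ > γ_I} T(B(c, p^γ)) (p^γ − p^{γ−1}). -/

import Mathlib

open MeasureTheory

/-- The index (base-`p` logarithm of the radius) of the smallest ball of `ℚ_[p]`
containing the two points `x` and `y` (for `x ≠ y`): its radius is `‖x - y‖ = p ^ (-(x-y).valuation)`. -/
noncomputable def supIdx {p : ℕ} [Fact p.Prime] (x y : ℚ_[p]) : ℤ := -(x - y).valuation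

/-- The index of the smallest ball containing the three points `x`, `ξ`, `η`
(for pairwise distinct points): its radius is `max (‖x-ξ‖, ‖x-η‖, ‖ξ-η‖)`. -/
noncomputable def sup3Idx {p : ℕ} [Fact p.Prime] (x ξ η : ℚ_[p]) : ℤ :=
  max (supIdx x ξ) (max (supIdx x η) (supIdx ξ η))

/-- A ball kernel: a function on balls of `ℚ_[p]`, encoded as a function of a center and
an index (log_p of the radius), independent of the choice of center in the ball. -/
def IsBallKernel {p : ℕ} [Fact p.Prime] (F : ℚ_[p] → ℤ → ℂ) : Prop :=
  ∀ c c' : ℚ_[p], ∀ γ : ℤ, dist c c' ≤ (p : ℝ) ^ γ → F c γ = F c' γ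

/-- Summability of a ball kernel: for every ball `B(c, p^γ₀)`,
`Σ_{γ > γ₀} ‖F(B(c, p^γ))‖ (p^γ - p^(γ-1)) < ∞`. -/
def KernelSummable {p : ℕ} [Fact p.Prime] (F : ℚ_[p] → ℤ → ℂ) : Prop :=
  ∀ c : ℚ_[p], ∀ γ₀ : ℤ, Summable (fun n : ℕ =>
    ‖F c (γ₀ + 1 + n)‖ * ((p : ℝ) ^ (γ₀ + 1 + (n : ℤ)) - (p : ℝ) ^ (γ₀ + (n : ℤ))))

/-- An ultrametric wavelet with ball `B(c, p^γ)`: vanishes outside the ball, is constant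
on each of the `p` maximal subballs (balls of radius `p^(γ-1)`), has zero mean, and is
not identically zero. -/
def IsWavelet {p : ℕ} [Fact p.Prime] [MeasurableSpace ℚ_[p]] (μ : Measure ℚ_[p])
    (ψ : ℚ_[p] → ℂ) (c : ℚ_[p]) (γ : ℤ) : Prop :=
  (∀ x, (p : ℝ) ^ γ < dist x c → ψ x = 0) ∧
    (∀ x y, dist x y ≤ (p : ℝ) ^ (γ - 1) → ψ x = ψ y) ∧
    (∫ x, ψ x ∂μ) = 0 ∧ ψ ≠ 0

/-- The eigenvalue `λ_I = T(I) ν(I) + Σ_{J > I} T(J) (ν(J) - ν(J,I))` attached to the ball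
`I = B(c, p^γI)` and the ball kernel `T`. -/
noncomputable def lamBall {p : ℕ} [Fact p.Prime] (T : ℚ_[p] → ℤ → ℂ) (c : ℚ_[p]) (γI : ℤ) : ℂ :=
  T c γI * (((p : ℝ) ^ γI : ℝ) : ℂ) +
    ∑' n : ℕ, T c (γI + 1 + n) *
      (((p : ℝ) ^ (γI + 1 + (n : ℤ)) - (p : ℝ) ^ (γI + (n : ℤ)) : ℝ) : ℂ)

/-- The coefficient `Φ_{I,J}` for balls `J = B(c, p^γJ) ⊊ I = B(c, p^γI)`. -/
noncomputable def PhiIJ {p : ℕ} [Fact p.Prime] (F : ℚ_[p] → ℤ → ℂ) (c : ℚ_[p])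
    (γI γJ : ℤ) : ℂ :=
  (((p : ℝ) ^ (2 * (γI - 1)) : ℝ) : ℂ) * F c γI - (((p : ℝ) ^ (2 * γJ) : ℝ) : ℂ) * F c γJ -
    ∑ γ ∈ Finset.Ioo γJ γI, (((p : ℝ) ^ (2 * γ) - (p : ℝ) ^ (2 * γ - 2) : ℝ) : ℂ) * F c γ

/-- The (spatial) operator of the quadratic cascade equation:
`∫∫ F(sup(x,ξ,η)) f(ξ)(f(η) - f(x)) dμ(ξ) dμ(η) + ∫ G(sup(x,ξ))(f(x) - f(ξ)) dμ(ξ)`. -/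
noncomputable def cascadeOp {p : ℕ} [Fact p.Prime] [MeasurableSpace ℚ_[p]]
    (μ : Measure ℚ_[p]) (F G : ℚ_[p] → ℤ → ℂ) (f : ℚ_[p] → ℂ) (x : ℚ_[p]) : ℂ :=
  (∫ ξ, ∫ η, F x (sup3Idx x ξ η) * (f ξ * (f η - f x)) ∂μ ∂μ) +
    ∫ ξ, G x (supIdx x ξ) * (f x - f ξ) ∂μ

/-- `v` satisfies the quadratic cascade equation
`∂ₜ v(x,t) + ∫∫ F(sup(x,ξ,η)) v(ξ,t)(v(η,t) - v(x,t)) dμ(ξ) dμ(η)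
  + ∫ G(sup(x,ξ))(v(x,t) - v(ξ,t)) dμ(ξ) = 0` for all `x ∈ ℚ_p` and all `t > 0`. -/
def SatisfiesCascade {p : ℕ} [Fact p.Prime] [MeasurableSpace ℚ_[p]]
    (μ : Measure ℚ_[p]) (F G : ℚ_[p] → ℤ → ℂ) (v : ℚ_[p] → ℝ → ℂ) : Prop :=
  ∀ x : ℚ_[p], ∀ t : ℝ, 0 < t →
    HasDerivAt (fun s => v x s) (-(cascadeOp μ F G (fun y => v y t) x)) t

section Helpers

open Metric ENNReal

variable {p : ℕ} [Fact p.Prime]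

private lemma pR_pos : (0:ℝ) < p := by exact_mod_cast (Fact.out : p.Prime).pos
private lemma one_lt_pR : (1:ℝ) < p := by exact_mod_cast (Fact.out : p.Prime).one_lt
private lemma zpow_pos_idx (γ : ℤ) : (0:ℝ) < (p:ℝ)^γ := zpow_pos pR_pos γ
private lemma zpow_lt_idx {m n : ℤ} (h : m < n) : (p:ℝ)^m < (p:ℝ)^n :=
  zpow_lt_zpow_right₀ one_lt_pR h
private lemma zpow_le_idx {m n : ℤ} (h : m ≤ n) : (p:ℝ)^m ≤ (p:ℝ)^n :=
  zpow_le_zpow_right₀ (le_of_lt one_lt_pR) h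
private lemma zpow_inj_idx {m n : ℤ} (h : (p:ℝ)^m = (p:ℝ)^n) : m = n :=
  zpow_right_injective₀ pR_pos (ne_of_gt one_lt_pR) h
private lemma lt_idx_of_lt {m n : ℤ} (h : (p:ℝ)^m < (p:ℝ)^n) : m < n := by
  by_contra hc
  exact absurd (zpow_le_idx (by omega : n ≤ m)) (not_le.2 h)

private lemma exists_digit (z : ℚ_[p]) (hz : ‖z‖ ≤ 1) :
    ∃ i : ℕ, i < p ∧ ‖z - (i:ℚ_[p])‖ ≤ (p:ℝ)^(-1:ℤ) := by
  set z' : ℤ_[p] := ⟨z, hz⟩ with hz'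
  refine ⟨z'.appr 1, by simpa using z'.appr_lt 1, ?_⟩
  have h1 := (PadicInt.norm_le_pow_iff_mem_span_pow (z' - (z'.appr 1 : ℤ_[p])) 1).2
    (by simpa using z'.appr_spec 1)
  have : ((z' - (z'.appr 1 : ℤ_[p]) : ℤ_[p]) : ℚ_[p]) = z - (z'.appr 1 : ℚ_[p]) := by
    push_cast [hz']
    exact PadicInt.coe_sub _ _
  rw [PadicInt.norm_def, this] at h1
  simpa using h1

/-- centers of the maximal subballs -/
private noncomputable def ctr (a : ℚ_[p]) (γ : ℤ) (i : ℕ) : ℚ_[p] :=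
  a + (i:ℚ_[p]) * (p:ℚ_[p])^(-γ)

private lemma ball_eq_biUnion (a : ℚ_[p]) (γ : ℤ) :
    closedBall a ((p:ℝ)^γ) = ⋃ i ∈ Finset.range p, closedBall (ctr a γ i) ((p:ℝ)^(γ-1)) := by
  have hpne : ((p:ℚ_[p]) : ℚ_[p]) ≠ 0 := by
    exact_mod_cast (Nat.cast_ne_zero (R := ℚ_[p])).2 (Fact.out : p.Prime).ne_zero
  ext x
  simp only [Set.mem_iUnion, Finset.mem_range, mem_closedBall, dist_eq_norm]
  constructor
  · intro hx
    have hz : ‖(x - a) * (p:ℚ_[p])^γ‖ ≤ 1 := by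
      rw [norm_mul, Padic.norm_p_zpow]
      calc ‖x - a‖ * (p:ℝ)^(-γ) ≤ (p:ℝ)^γ * (p:ℝ)^(-γ) := by
            apply mul_le_mul_of_nonneg_right hx (zpow_nonneg (le_of_lt pR_pos) _)
        _ = 1 := by rw [← zpow_add₀ (ne_of_gt pR_pos)]; simp
    obtain ⟨i, hi, hni⟩ := exists_digit _ hz
    refine ⟨i, hi, ?_⟩
    have key : x - ctr a γ i = ((x - a) * (p:ℚ_[p])^γ - (i:ℚ_[p])) * (p:ℚ_[p])^(-γ) := by
      have hpz : (p:ℚ_[p])^γ ≠ 0 := zpow_ne_zero _ hpne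
      rw [sub_mul, mul_assoc, ← zpow_add₀ hpne, add_neg_cancel, zpow_zero, mul_one]
      simp only [ctr]
      ring
    rw [key, norm_mul, Padic.norm_p_zpow]
    calc ‖(x - a) * (p:ℚ_[p])^γ - (i:ℚ_[p])‖ * (p:ℝ)^(-(-γ))
        ≤ (p:ℝ)^(-1:ℤ) * (p:ℝ)^γ := by
          rw [neg_neg]
          exact mul_le_mul_of_nonneg_right hni (zpow_nonneg (le_of_lt pR_pos) _)
      _ = (p:ℝ)^(γ-1) := by rw [← zpow_add₀ (ne_of_gt pR_pos)]; ring_nf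
  · rintro ⟨i, hi, hxi⟩
    have h1 : ‖x - a‖ ≤ max ‖x - ctr a γ i‖ ‖ctr a γ i - a‖ := by
      have := Padic.nonarchimedean (q := x - ctr a γ i) (r := ctr a γ i - a)
      simpa using this
    have h2 : ‖ctr a γ i - a‖ ≤ (p:ℝ)^γ := by
      simp only [ctr, add_sub_cancel_left, norm_mul, Padic.norm_p_zpow, neg_neg]
      calc ‖(i:ℚ_[p])‖ * (p:ℝ)^γ ≤ 1 * (p:ℝ)^γ := by
            apply mul_le_mul_of_nonneg_right _ (zpow_nonneg (le_of_lt pR_pos) _)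
            exact_mod_cast Padic.norm_int_le_one (p := p) (i:ℤ)
        _ = (p:ℝ)^γ := one_mul _
    refine le_trans h1 (max_le (le_trans hxi ?_) h2)
    exact zpow_le_idx (by omega)

private lemma ctr_disjoint (a : ℚ_[p]) (γ : ℤ) {i j : ℕ} (hi : i < p) (hj : j < p)
    (hij : i ≠ j) :
    Disjoint (closedBall (ctr a γ i) ((p:ℝ)^(γ-1))) (closedBall (ctr a γ j) ((p:ℝ)^(γ-1))) := by
  rw [Set.disjoint_left]
  intro x hxi hxj
  simp only [mem_closedBall, dist_eq_norm] at hxi hxj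
  have hd : ‖ctr a γ i - ctr a γ j‖ ≤ (p:ℝ)^(γ-1) := by
    have := Padic.nonarchimedean (q := ctr a γ i - x) (r := x - ctr a γ j)
    simp only [sub_add_sub_cancel] at this
    refine le_trans this (max_le ?_ hxj)
    rwa [← norm_neg, neg_sub]
  have heq : ctr a γ i - ctr a γ j = ((i:ℚ_[p]) - (j:ℚ_[p])) * (p:ℚ_[p])^(-γ) := by
    simp only [ctr]; ring
  have hnrm : ‖ctr a γ i - ctr a γ j‖ = (p:ℝ)^γ := by
    rw [heq, norm_mul, Padic.norm_p_zpow, neg_neg]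
    have : ‖((i:ℚ_[p]) - (j:ℚ_[p]))‖ = 1 := by
      have hcast : ((i:ℚ_[p]) - (j:ℚ_[p])) = (((i:ℤ) - (j:ℤ) : ℤ) : ℚ_[p]) := by push_cast; ring
      rw [hcast]
      have h1 : ‖(((i:ℤ) - (j:ℤ) : ℤ) : ℚ_[p])‖ ≤ 1 := Padic.norm_int_le_one _
      rcases lt_or_eq_of_le h1 with h | h
      · exfalso
        replace h := (PadicInt.norm_int_lt_one_iff_dvd (p := p) _).1 (by rw [PadicInt.norm_def]; push_cast; exact h)
        have habs : ((p:ℤ)) ∣ (i:ℤ) - (j:ℤ) := h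
        have hd0 : (i:ℤ) - j ≠ 0 := sub_ne_zero.2 (by exact_mod_cast hij)
        have hle : (p:ℤ) ≤ |(i:ℤ) - j| := Int.le_of_dvd (abs_pos.2 hd0) ((dvd_abs _ _).2 habs)
        have hlt : |(i:ℤ) - j| < p := abs_lt.2 ⟨by omega, by omega⟩
        linarith
      · exact h
    rw [this, one_mul]
  rw [hnrm] at hd
  have : (p:ℝ)^(γ-1) < (p:ℝ)^γ := zpow_lt_idx (by omega)
  linarith

variable [MeasurableSpace ℚ_[p]] [BorelSpace ℚ_[p]]
variable (μ : Measure ℚ_[p]) [μ.IsAddHaarMeasure]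

private lemma meas_cBall_transl (a b : ℚ_[p]) (r : ℝ) :
    μ (closedBall a r) = μ (closedBall b r) := by
  have key : (fun x => (a - b) + x) ⁻¹' closedBall a r = closedBall b r := by
    ext x
    simp only [Set.mem_preimage, mem_closedBall, dist_eq_norm]
    constructor <;> intro h <;>
      · have : a - b + x - a = x - b := by ring
        first
          | rwa [this] at h
          | rwa [this]
  rw [← key, measure_preimage_add]

private lemma meas_cBall_rec (γ : ℤ) :
    μ (closedBall (0:ℚ_[p]) ((p:ℝ)^γ)) = (p:ℝ≥0∞) * μ (closedBall (0:ℚ_[p]) ((p:ℝ)^(γ-1))) := by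
  rw [ball_eq_biUnion 0 γ, measure_biUnion_finset ?_ (fun i _ => measurableSet_closedBall)]
  · rw [Finset.sum_congr rfl (fun i _ => meas_cBall_transl μ (ctr 0 γ i) 0 ((p:ℝ)^(γ-1)))]
    simp [Finset.sum_const, nsmul_eq_mul]
  · intro i hi j hj hij
    exact ctr_disjoint 0 γ (Finset.mem_range.1 hi) (Finset.mem_range.1 hj) hij

private lemma meas_cBall (hμ : μ (closedBall (0:ℚ_[p]) 1) = 1) (a : ℚ_[p]) (γ : ℤ) :
    μ (closedBall a ((p:ℝ)^γ)) = ENNReal.ofReal ((p:ℝ)^γ) := by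
  rw [meas_cBall_transl μ a 0]
  have hp0 : (p:ℝ≥0∞) ≠ 0 := by
    exact_mod_cast Nat.cast_ne_zero.2 (Fact.out : p.Prime).ne_zero
  have hpt : (p:ℝ≥0∞) ≠ ⊤ := ENNReal.natCast_ne_top p
  have hmul : ∀ x : ℝ, 0 ≤ x → (p:ℝ≥0∞) * ENNReal.ofReal x = ENNReal.ofReal ((p:ℝ) * x) := by
    intro x hx
    rw [ENNReal.ofReal_mul (le_of_lt pR_pos), ENNReal.ofReal_natCast]
  induction γ using Int.induction_on with
  | zero => simpa using hμ
  | succ n ih =>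
      have := meas_cBall_rec μ (n+1)
      rw [show ((n:ℤ)+1-1) = (n:ℤ) by ring] at this
      rw [this, ih, hmul _ (zpow_nonneg (le_of_lt pR_pos) _)]
      congr 1
      rw [← zpow_one_add₀ (ne_of_gt pR_pos)]
      ring_nf
  | pred n ih =>
      have := meas_cBall_rec μ (-n)
      rw [show ((-n:ℤ)-1) = (-n-1:ℤ) by ring, ih] at this
      have h2 : ENNReal.ofReal ((p:ℝ)^(-(n:ℤ))) =
          (p:ℝ≥0∞) * ENNReal.ofReal ((p:ℝ)^(-(n:ℤ)-1)) := by
        rw [hmul _ (zpow_nonneg (le_of_lt pR_pos) _), ← zpow_one_add₀ (ne_of_gt pR_pos)]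
        ring_nf
      rw [h2] at this
      exact (ENNReal.mul_right_inj hp0 hpt).1 this.symm

end Helpers

section NormHelpers

open Metric ENNReal

variable {p : ℕ} [Fact p.Prime]

private lemma dist_eq_pow_supIdx (x y : ℚ_[p]) (h : x ≠ y) : dist x y = (p:ℝ)^(supIdx x y) := by
  rw [dist_eq_norm, Padic.norm_eq_zpow_neg_valuation (sub_ne_zero.2 h)]; rfl

private lemma supIdx_eq_of_between (x y : ℚ_[p]) (h : x ≠ y) {γ : ℤ}
    (hub : dist x y ≤ (p:ℝ)^γ) (hlb : (p:ℝ)^(γ-1) < dist x y) : supIdx x y = γ := by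
  rw [dist_eq_pow_supIdx x y h] at hub hlb
  rcases lt_or_eq_of_le hub with h1 | h1
  · have := lt_idx_of_lt h1; have := lt_idx_of_lt hlb; omega
  · exact zpow_inj_idx h1

private lemma norm_sub_eq_of_lt {a b : ℚ_[p]} (h : ‖a‖ < ‖b‖) : ‖a - b‖ = ‖b‖ := by
  have := Padic.add_eq_max_of_ne (q := a) (r := -b) (by rw [norm_neg]; exact ne_of_lt h)
  rw [← sub_eq_add_neg] at this
  rw [this, norm_neg, max_eq_right (le_of_lt h)]

/-- The shell of radius `p^γ` around `c`. -/
private def shell (c : ℚ_[p]) (γ : ℤ) : Set ℚ_[p] := {y | dist y c = (p:ℝ)^γ}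

private lemma shell_eq (c : ℚ_[p]) (γ : ℤ) :
    shell c γ = closedBall c ((p:ℝ)^γ) \ closedBall c ((p:ℝ)^(γ-1)) := by
  ext y
  simp only [shell, Set.mem_setOf_eq, Set.mem_diff, mem_closedBall]
  constructor
  · intro h
    refine ⟨le_of_eq h, ?_⟩
    rw [h, not_le]
    exact zpow_lt_idx (by omega)
  · rintro ⟨h1, h2⟩
    rw [not_le] at h2
    have hyc : y ≠ c := by
      intro h
      rw [h, dist_self] at h2
      exact absurd h2 (not_lt.2 (zpow_nonneg (le_of_lt pR_pos) _))
    rw [dist_eq_pow_supIdx y c hyc, supIdx_eq_of_between y c hyc h1 h2]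

private lemma measurableSet_shell [MeasurableSpace ℚ_[p]] [BorelSpace ℚ_[p]]
    (c : ℚ_[p]) (γ : ℤ) : MeasurableSet (shell c γ) :=
  ((continuous_id.dist continuous_const).measurable (measurableSet_singleton _) : _)

private lemma shell_disjoint (c : ℚ_[p]) {γ γ' : ℤ} (h : γ ≠ γ') :
    Disjoint (shell c γ) (shell c γ') := by
  rw [Set.disjoint_left]
  intro y h1 h2
  exact h (zpow_inj_idx (h1.symm.trans h2))

private lemma iUnion_shell (c : ℚ_[p]) (γI : ℤ) :
    ⋃ n : ℕ, shell c (γI + 1 + n) = (closedBall c ((p:ℝ)^γI))ᶜ := by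
  ext y
  simp only [Set.mem_iUnion, shell, Set.mem_setOf_eq, Set.mem_compl_iff, mem_closedBall, not_le]
  constructor
  · rintro ⟨n, hn⟩
    rw [hn]
    exact zpow_lt_idx (by omega)
  · intro h
    have hyc : y ≠ c := by
      intro he
      rw [he, dist_self] at h
      exact absurd h (not_lt.2 (zpow_nonneg (le_of_lt pR_pos) _))
    have hd := dist_eq_pow_supIdx y c hyc
    have hlt : γI < supIdx y c := lt_idx_of_lt (by rw [← hd]; exact h)
    refine ⟨(supIdx y c - γI - 1).toNat, ?_⟩
    rw [hd]
    congr 1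
    omega

private lemma meas_shell [MeasurableSpace ℚ_[p]] [BorelSpace ℚ_[p]]
    (μ : Measure ℚ_[p]) [μ.IsAddHaarMeasure] (hμ : μ (closedBall (0:ℚ_[p]) 1) = 1)
    (c : ℚ_[p]) (γ : ℤ) :
    μ (shell c γ) = ENNReal.ofReal ((p:ℝ)^γ - (p:ℝ)^(γ-1)) := by
  rw [shell_eq, measure_diff (closedBall_subset_closedBall (zpow_le_idx (by omega)))
    measurableSet_closedBall.nullMeasurableSet
    (by rw [meas_cBall μ hμ]; exact ENNReal.ofReal_ne_top),
    meas_cBall μ hμ, meas_cBall μ hμ,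
    ← ENNReal.ofReal_sub _ (le_of_lt (zpow_pos_idx _))]

private lemma measurable_valuation [MeasurableSpace ℚ_[p]] [BorelSpace ℚ_[p]] :
    Measurable (Padic.valuation (p := p)) := by
  apply measurable_to_countable'
  intro m
  have : Padic.valuation (p := p) ⁻¹' {m} =
      {z : ℚ_[p] | ‖z‖ = (p:ℝ)^(-m)} ∪ (if m = 0 then {0} else ∅) := by
    ext z
    simp only [Set.mem_preimage, Set.mem_singleton_iff, Set.mem_union, Set.mem_setOf_eq]
    constructor
    · intro h
      rcases eq_or_ne z 0 with hz | hz
      · right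
        rw [hz, Padic.valuation_zero] at h
        simp [hz, ← h]
      · left
        rw [Padic.norm_eq_zpow_neg_valuation hz, h]
    · rintro (h | h)
      · have hz : z ≠ 0 := by
          intro hz
          rw [hz, norm_zero] at h
          exact absurd h.symm (ne_of_gt (zpow_pos pR_pos _))
        rw [Padic.norm_eq_zpow_neg_valuation hz] at h
        have := zpow_inj_idx h
        omega
      · rcases eq_or_ne m 0 with hm | hm
        · simp only [hm, if_pos rfl, Set.mem_singleton_iff] at h
          rw [h, Padic.valuation_zero, hm]
        · simp [hm] at h
  rw [this]
  apply MeasurableSet.union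
  · exact ((continuous_norm : Continuous fun z : ℚ_[p] => ‖z‖).measurable
      (measurableSet_singleton _) : _)
  · split <;> simp

private lemma measurable_T_supIdx [MeasurableSpace ℚ_[p]] [BorelSpace ℚ_[p]]
    (T : ℚ_[p] → ℤ → ℂ) (x : ℚ_[p]) :
    Measurable (fun y => T x (supIdx x y)) := by
  have h1 : Measurable (fun y : ℚ_[p] => supIdx x y) := by
    unfold supIdx
    exact (measurable_valuation.comp (measurable_const.sub measurable_id)).neg
  exact (measurable_from_top (f := T x)).comp h1

end NormHelpers

section WaveletFacts

open Metric ENNReal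

variable {p : ℕ} [Fact p.Prime]
variable [MeasurableSpace ℚ_[p]] [BorelSpace ℚ_[p]] (μ : Measure ℚ_[p]) [μ.IsAddHaarMeasure]
variable {ψ : ℚ_[p] → ℂ} {c : ℚ_[p]} {γI : ℤ}

omit [MeasurableSpace ℚ_[p]] [BorelSpace ℚ_[p]] in
private lemma wavelet_continuous
    (hconst : ∀ x y : ℚ_[p], dist x y ≤ (p:ℝ)^(γI-1) → ψ x = ψ y) :
    Continuous ψ := by
  rw [continuous_iff_continuousAt]
  intro x
  have hmem : closedBall x ((p:ℝ)^(γI-1)) ∈ nhds x :=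
    closedBall_mem_nhds x (zpow_pos_idx _)
  have : ψ =ᶠ[nhds x] fun _ => ψ x := by
    filter_upwards [hmem] with y hy
    exact (hconst x y (by rwa [dist_comm, ← mem_closedBall])).symm
  exact (continuousAt_const.congr this.symm)

private lemma wavelet_integrable (hsupp : ∀ x : ℚ_[p], (p:ℝ)^γI < dist x c → ψ x = 0)
    (hconst : ∀ x y : ℚ_[p], dist x y ≤ (p:ℝ)^(γI-1) → ψ x = ψ y) :
    Integrable ψ μ := by
  apply (wavelet_continuous hconst).integrable_of_hasCompactSupport
  apply HasCompactSupport.intro (isCompact_closedBall c ((p:ℝ)^γI))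
  intro y hy
  exact hsupp y (by rwa [mem_closedBall, not_le] at hy)

private lemma integral_wavelet_ball (hsupp : ∀ x : ℚ_[p], (p:ℝ)^γI < dist x c → ψ x = 0)
    (hzero : (∫ x, ψ x ∂μ) = 0) :
    ∫ y in closedBall c ((p:ℝ)^γI), ψ y ∂μ = 0 := by
  rw [setIntegral_eq_integral_of_forall_compl_eq_zero, hzero]
  intro y hy
  exact hsupp y (by rwa [mem_closedBall, not_le] at hy)

end WaveletFacts

open Metric ENNReal

/-- Wavelets are eigenfunctions of ultrametric pseudodifferential operators:
for a summable ball kernel `T` and a wavelet `ψ` with ball `I = B(c, p^γI)`, the integral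
`∫ T(sup(x,y))(ψ(x) - ψ(y)) dμ(y)` converges absolutely and equals `λ_I ψ(x)` where
`λ_I = T(I) p^γI + Σ_{γ > γI} T(B(c,p^γ)) (p^γ - p^(γ-1))`. -/
theorem wavelet_eigenfunction {p : ℕ} [Fact p.Prime]
    [MeasurableSpace ℚ_[p]] [BorelSpace ℚ_[p]]
    (μ : Measure ℚ_[p]) [μ.IsAddHaarMeasure] (hμ : μ (Metric.closedBall 0 1) = 1)
    (T : ℚ_[p] → ℤ → ℂ) (hT : IsBallKernel T) (hTs : KernelSummable T)
    (ψ : ℚ_[p] → ℂ) (c : ℚ_[p]) (γI : ℤ) (hψ : IsWavelet μ ψ c γI) :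
    ∀ x : ℚ_[p],
      Integrable (fun y => T x (supIdx x y) * (ψ x - ψ y)) μ ∧
      (∫ y, T x (supIdx x y) * (ψ x - ψ y) ∂μ) = lamBall T c γI * ψ x := by
  obtain ⟨hsupp, hconst, hzero, -⟩ := hψ
  have ψint : Integrable ψ μ := wavelet_integrable μ hsupp hconst
  intro x
  by_cases hx : dist x c ≤ (p:ℝ)^γI
  · -- x inside the ball I
    have hTxc : T x γI = T c γI := hT x c γI hx
    have hBxI : closedBall x ((p:ℝ)^(γI-1)) ⊆ closedBall c ((p:ℝ)^γI) := by
      intro z hz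
      rw [mem_closedBall] at hz ⊢
      exact le_trans (IsUltrametricDist.dist_triangle_max z x c)
        (max_le (le_trans hz (zpow_le_idx (by omega))) hx)
    have hImeas : MeasurableSet (closedBall c ((p:ℝ)^γI)) := measurableSet_closedBall
    have hBxmeas : MeasurableSet (closedBall x ((p:ℝ)^(γI-1))) := measurableSet_closedBall
    have hdm : MeasurableSet (closedBall c ((p:ℝ)^γI) \ closedBall x ((p:ℝ)^(γI-1))) :=
      hImeas.diff hBxmeas
    have hμI := meas_cBall μ hμ c γI
    have hμBx := meas_cBall μ hμ x (γI-1)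
    have hμdiff : μ (closedBall c ((p:ℝ)^γI) \ closedBall x ((p:ℝ)^(γI-1)))
        = ENNReal.ofReal ((p:ℝ)^γI - (p:ℝ)^(γI-1)) := by
      rw [measure_diff hBxI hBxmeas.nullMeasurableSet
        (by rw [hμBx]; exact ENNReal.ofReal_ne_top), hμI, hμBx,
        ← ENNReal.ofReal_sub _ (le_of_lt (zpow_pos_idx _))]
    set f1 : ℚ_[p] → ℂ := (closedBall c ((p:ℝ)^γI) \ closedBall x ((p:ℝ)^(γI-1))).indicator
        (fun y => T c γI * (ψ x - ψ y)) with hf1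
    set f2 : ℚ_[p] → ℂ := (closedBall c ((p:ℝ)^γI))ᶜ.indicator
        (fun y => T x (supIdx x y) * ψ x) with hf2
    have hsplit : ∀ y, T x (supIdx x y) * (ψ x - ψ y) = f1 y + f2 y := by
      intro y
      rw [hf1, hf2]
      by_cases hy1 : dist y c ≤ (p:ℝ)^γI
      · have hyI : y ∈ closedBall c ((p:ℝ)^γI) := hy1
        rw [Set.indicator_of_notMem (s := (closedBall c ((p:ℝ)^γI))ᶜ) (by simpa using hyI) _]
        by_cases hy2 : dist y x ≤ (p:ℝ)^(γI-1)
        · have hψeq : ψ x = ψ y := (hconst y x hy2).symm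
          rw [Set.indicator_of_notMem (fun hmem => hmem.2 (mem_closedBall.2 hy2)) _, ← hψeq]
          ring
        · have hyd : y ∈ closedBall c ((p:ℝ)^γI) \ closedBall x ((p:ℝ)^(γI-1)) :=
            ⟨hyI, by simpa using hy2⟩
          have hy2' : (p:ℝ)^(γI-1) < dist y x := not_le.1 hy2
          have hxy : x ≠ y := by
            rw [← dist_pos, dist_comm]
            exact lt_trans (zpow_pos_idx (γI-1)) hy2'
          have hub : dist x y ≤ (p:ℝ)^γI := by
            refine le_trans (IsUltrametricDist.dist_triangle_max x c y) (max_le hx ?_)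
            rwa [dist_comm]
          have hidx : supIdx x y = γI :=
            supIdx_eq_of_between x y hxy hub (by rwa [dist_comm])
          rw [hidx, hTxc, Set.indicator_of_mem hyd]
          ring
      · have hyI : y ∉ closedBall c ((p:ℝ)^γI) := by simpa using hy1
        have hψy : ψ y = 0 := hsupp y (not_le.1 hy1)
        rw [Set.indicator_of_notMem (fun hm => hyI hm.1) _,
          Set.indicator_of_mem (Set.mem_compl hyI), hψy]
        ring
    have hshell : ∀ n : ℕ, ∀ y ∈ shell c (γI + 1 + (n:ℤ)),
        T x (supIdx x y) * ψ x = T c (γI + 1 + (n:ℤ)) * ψ x := by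
      intro n y hy
      have hyc : dist y c = (p:ℝ)^(γI+1+(n:ℤ)) := hy
      have h1 : ‖x - c‖ < ‖y - c‖ := by
        rw [← dist_eq_norm, ← dist_eq_norm, hyc]
        exact lt_of_le_of_lt hx (zpow_lt_idx (by omega))
      have h2 := norm_sub_eq_of_lt h1
      rw [show x - c - (y - c) = x - y by ring] at h2
      have hdxy : dist x y = (p:ℝ)^(γI+1+(n:ℤ)) := by
        rw [dist_eq_norm, h2, ← dist_eq_norm, hyc]
      have hxy : x ≠ y := by rw [← dist_pos, hdxy]; exact zpow_pos_idx _
      have hidx : supIdx x y = γI+1+(n:ℤ) :=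
        supIdx_eq_of_between x y hxy (le_of_eq hdxy)
          (by rw [hdxy]; exact zpow_lt_idx (by omega))
      rw [hidx, hT x c _ (le_trans hx (zpow_le_idx (by omega)))]
    have hpd : Pairwise (Function.onFun Disjoint fun n : ℕ => shell c (γI + 1 + (n:ℤ))) := by
      intro n m hnm
      exact shell_disjoint c (fun h => hnm (by exact_mod_cast add_left_cancel h))
    have hμshell : ∀ n : ℕ, μ (shell c (γI+1+(n:ℤ)))
        = ENNReal.ofReal ((p:ℝ)^(γI+1+(n:ℤ)) - (p:ℝ)^(γI+(n:ℤ))) := by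
      intro n
      rw [meas_shell μ hμ c _, show (γI + 1 + (n:ℤ)) - 1 = γI + (n:ℤ) by ring]
    have hsummable : Summable (fun n : ℕ =>
        ‖T c (γI+1+(n:ℤ))‖ * ‖ψ x‖ * ((p:ℝ)^(γI+1+(n:ℤ)) - (p:ℝ)^(γI+(n:ℤ)))) := by
      refine ((hTs c γI).mul_left ‖ψ x‖).congr (fun n => by ring)
    have hnonneg : ∀ n : ℕ, 0 ≤
        ‖T c (γI+1+(n:ℤ))‖ * ‖ψ x‖ * ((p:ℝ)^(γI+1+(n:ℤ)) - (p:ℝ)^(γI+(n:ℤ))) := by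
      intro n
      have h0 : (0:ℝ) ≤ (p:ℝ)^(γI+1+(n:ℤ)) - (p:ℝ)^(γI+(n:ℤ)) :=
        sub_nonneg.2 (zpow_le_idx (by omega))
      positivity
    have hf2on : IntegrableOn (fun y => T x (supIdx x y) * ψ x)
        ((closedBall c ((p:ℝ)^γI))ᶜ) μ := by
      refine ⟨((measurable_T_supIdx T x).mul_const _).aestronglyMeasurable.restrict, ?_⟩
      rw [hasFiniteIntegral_iff_norm]
      have hre : ∫⁻ a in (closedBall c ((p:ℝ)^γI))ᶜ, ENNReal.ofReal ‖T x (supIdx x a) * ψ x‖ ∂μ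
          = ∑' n : ℕ, ∫⁻ a in shell c (γI+1+(n:ℤ)),
              ENNReal.ofReal ‖T x (supIdx x a) * ψ x‖ ∂μ := by
        rw [← iUnion_shell c γI, lintegral_iUnion (fun n => measurableSet_shell c _) hpd]
      have heach : ∀ n : ℕ, ∫⁻ a in shell c (γI+1+(n:ℤ)),
            ENNReal.ofReal ‖T x (supIdx x a) * ψ x‖ ∂μ
          = ENNReal.ofReal
              (‖T c (γI+1+(n:ℤ))‖ * ‖ψ x‖ * ((p:ℝ)^(γI+1+(n:ℤ)) - (p:ℝ)^(γI+(n:ℤ)))) := by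
        intro n
        rw [setLIntegral_congr_fun (measurableSet_shell c _)
          ((fun y hy => by rw [hshell n y hy]) :
            ∀ y ∈ shell c (γI+1+(n:ℤ)), ENNReal.ofReal ‖T x (supIdx x y) * ψ x‖
              = ENNReal.ofReal ‖T c (γI+1+(n:ℤ)) * ψ x‖),
          setLIntegral_const, hμshell n,
          ← ENNReal.ofReal_mul (norm_nonneg _), norm_mul]
      rw [hre, tsum_congr heach, ← ENNReal.ofReal_tsum_of_nonneg hnonneg hsummable]
      exact ENNReal.ofReal_lt_top
    have hf2int : Integrable f2 μ := by
      rw [hf2, integrable_indicator_iff hImeas.compl]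
      exact hf2on
    have hf1on : IntegrableOn (fun y => T c γI * (ψ x - ψ y))
        (closedBall c ((p:ℝ)^γI) \ closedBall x ((p:ℝ)^(γI-1))) μ := by
      refine Integrable.const_mul ?_ _
      exact (integrableOn_const (by rw [hμdiff]; exact ENNReal.ofReal_ne_top)).sub
        ψint.integrableOn
    have hf1int : Integrable f1 μ := by
      rw [hf1, integrable_indicator_iff hdm]
      exact hf1on
    have hint2 : ∫ y, f2 y ∂μ = (∑' n : ℕ, T c (γI + 1 + (n:ℤ)) *
        (((p:ℝ)^(γI+1+(n:ℤ)) - (p:ℝ)^(γI+(n:ℤ)) : ℝ) : ℂ)) * ψ x := by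
      rw [hf2, integral_indicator hImeas.compl]
      rw [← iUnion_shell c γI] at hf2on ⊢
      rw [integral_iUnion (fun n => measurableSet_shell c _) hpd hf2on]
      have heach : ∀ n : ℕ, ∫ y in shell c (γI+1+(n:ℤ)), T x (supIdx x y) * ψ x ∂μ
          = (T c (γI+1+(n:ℤ)) * (((p:ℝ)^(γI+1+(n:ℤ)) - (p:ℝ)^(γI+(n:ℤ)) : ℝ) : ℂ)) * ψ x := by
        intro n
        rw [setIntegral_congr_fun (measurableSet_shell c _) (fun y hy => hshell n y hy),
          setIntegral_const, measureReal_def, hμshell n,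
          ENNReal.toReal_ofReal (sub_nonneg.2 (zpow_le_idx (by omega))), Complex.real_smul]
        push_cast
        ring
      rw [tsum_congr heach, tsum_mul_right]
    have hBxint : ∫ y in closedBall x ((p:ℝ)^(γI-1)), ψ y ∂μ = ((p:ℝ)^(γI-1) : ℝ) • ψ x := by
      rw [setIntegral_congr_fun hBxmeas
        (fun y hy => hconst y x (mem_closedBall.1 hy) : ∀ y ∈ closedBall x ((p:ℝ)^(γI-1)),
          ψ y = ψ x),
        setIntegral_const, measureReal_def, hμBx, ENNReal.toReal_ofReal (le_of_lt (zpow_pos_idx _))]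
    have hdiffψ : ∫ y in closedBall c ((p:ℝ)^γI) \ closedBall x ((p:ℝ)^(γI-1)), ψ y ∂μ
        = -(((p:ℝ)^(γI-1) : ℝ) • ψ x) := by
      rw [integral_diff hBxmeas ψint.integrableOn hBxI,
        integral_wavelet_ball μ hsupp hzero, hBxint, zero_sub]
    have hint1 : ∫ y, f1 y ∂μ = T c γI * (((p:ℝ)^γI : ℝ) : ℂ) * ψ x := by
      rw [hf1, integral_indicator hdm, integral_const_mul]
      rw [integral_sub
        (integrableOn_const (μ := μ) (s := closedBall c ((p:ℝ)^γI) \ closedBall x ((p:ℝ)^(γI-1)))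
          (C := ψ x) (by rw [hμdiff]; exact ENNReal.ofReal_ne_top) enorm_ne_top)
        ψint.integrableOn,
        setIntegral_const, measureReal_def, hμdiff,
        ENNReal.toReal_ofReal (sub_nonneg.2 (zpow_le_idx (by omega))), hdiffψ,
        Complex.real_smul, Complex.real_smul]
      push_cast
      ring
    constructor
    · rw [show (fun y => T x (supIdx x y) * (ψ x - ψ y)) = fun y => f1 y + f2 y
        from funext hsplit]
      exact hf1int.add hf2int
    · rw [show (fun y => T x (supIdx x y) * (ψ x - ψ y)) = fun y => f1 y + f2 y
        from funext hsplit, integral_add hf1int hf2int, hint1, hint2]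
      rw [lamBall, add_mul]
  · -- x outside the ball I
    have hx' : (p:ℝ)^γI < dist x c := not_le.1 hx
    have ψx0 : ψ x = 0 := hsupp x hx'
    have hxc : x ≠ c := dist_pos.1 (lt_trans (zpow_pos_idx γI) hx')
    have heq : (fun y => T x (supIdx x y) * (ψ x - ψ y))
        = fun y => (-(T x (supIdx x c))) * ψ y := by
      funext y
      by_cases hy : dist y c ≤ (p:ℝ)^γI
      · have h1 : ‖y - c‖ < ‖x - c‖ := by
          rw [← dist_eq_norm, ← dist_eq_norm]
          exact lt_of_le_of_lt hy hx'
        have h2 := norm_sub_eq_of_lt h1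
        rw [show y - c - (x - c) = -(x - y) by ring, norm_neg] at h2
        have hdxy : dist x y = dist x c := by rw [dist_eq_norm, dist_eq_norm, h2]
        have hxy : x ≠ y := by
          rw [← dist_pos, hdxy]
          exact lt_trans (zpow_pos_idx γI) hx'
        have hidx : supIdx x y = supIdx x c := by
          refine zpow_inj_idx (p := p) ?_
          rw [← dist_eq_pow_supIdx x y hxy, ← dist_eq_pow_supIdx x c hxc, hdxy]
        rw [hidx, ψx0]
        ring
      · rw [ψx0, hsupp y (not_le.1 hy)]
        ring
    constructor
    · rw [heq]
      exact ψint.const_mul _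
    · rw [heq, integral_const_mul, hzero, mul_zero, ψx0, mul_zero]
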